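/- arXiv:0806.3249 — 2 statements merged into one kernel-verified Lean document; each statement's English description precedes it below -/
import Mathlib

section
/- Let q > 0 and let V be a nonempty set of real numbers satisfying: (a) V ⊆ (−∞, 0); (b) if v ∈ V then v ∥ v ∈ V; (c) if v ∈ V then q + 2v ≠ 0 and v ⋈_q v ∈ V. Then q ≤ 32/27, and every v ∈ V satisfies v₋ ≤ v ≤ v₊, where v₊ is the unique real root of v³ − 2qv − q² = 0 in the interval [−3q/4, −q/2) and v₋ = q/v₊. -/
/-- Parallel connection of edge weights: `v₁ ∥ v₂ = (1+v₁)(1+v₂) - 1`. -/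
def parallelConn (v₁ v₂ : ℝ) : ℝ := (1 + v₁) * (1 + v₂) - 1

/-- Series connection of edge weights: `v₁ ⋈_q v₂ = v₁v₂ / (q + v₁ + v₂)`. -/
noncomputable def seriesConn (q v₁ v₂ : ℝ) : ℝ := v₁ * v₂ / (q + v₁ + v₂)

lemma step_up (q w C : ℝ) (hq : 0 < q) (h2 : -2 < w) (h0 : w < 0) (hqw : q + 2*w < 0)
    (hC : w^3 - 2*q*w - q^2 ≤ -C) (hCpos : 0 < C) :
    w + q/2 * C / 16 ≤ w + w * (w^3 - 2*q*w - q^2) / (q + 2*w)^2 := by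
  have hd2 : 0 < (q + 2*w)^2 := by nlinarith [mul_pos_of_neg_of_neg hqw hqw]
  have hd16 : (q + 2*w)^2 ≤ 16 := by nlinarith
  have hnum : q/2 * C ≤ w * (w^3 - 2*q*w - q^2) := by
    have hmul := mul_le_mul (show q/2 ≤ -w by linarith)
      (show C ≤ -(w^3 - 2*q*w - q^2) by linarith)
      (le_of_lt hCpos) (by linarith : (0:ℝ) ≤ -w)
    nlinarith [hmul]
  have hkey : q/2 * C / 16 ≤ w * (w^3 - 2*q*w - q^2) / (q + 2*w)^2 := by
    rw [div_le_div_iff₀ (by norm_num) hd2]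
    exact mul_le_mul hnum hd16 (le_of_lt hd2) (by nlinarith)
  linarith

lemma step_down (q w B : ℝ) (hq : 0 < q) (h2 : -2 < w) (h43 : w ≤ -4/3)
    (hD : q + 2*(w^2+2*w) < 0) (hB : w^3 + 2*w^2 - q ≤ -B) (hBpos : 0 < B) :
    w + w * (w^3 + 2*w^2 - q) / (q + 2*(w^2+2*w)) ≤ w - 2/3 * B := by
  have hDb : -(q + 2*(w^2 + 2*w)) ≤ 2 := by nlinarith [sq_nonneg (w+1)]
  have hkey : w * (w^3 + 2*w^2 - q) / (q + 2*(w^2 + 2*w)) ≤ -(2/3 * B) := by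
    rw [div_le_iff_of_neg hD]
    have hAB : 4/3 * B ≤ (-w) * (-(w^3 + 2*w^2 - q)) := by
      have := mul_le_mul (show (4:ℝ)/3 ≤ -w by linarith)
        (show B ≤ -(w^3 + 2*w^2 - q) by linarith)
        (by linarith) (by linarith : (0:ℝ) ≤ -w)
      linarith
    nlinarith
  linarith

lemma cneg_ptwise (q v : ℝ) (h : 32/27 < q) (h1 : -2 ≤ v) (h2 : v ≤ 0) :
    v^3 - 2*q*v - q^2 < 0 := by
  nlinarith [sq_nonneg (v + 8/9), sq_nonneg (3*v^2 - 2*q),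
    mul_nonneg (mul_nonneg (neg_nonneg.2 h2) (neg_nonneg.2 h2)) (neg_nonneg.2 h2),
    sq_nonneg (q - 32/27), mul_nonneg (sq_nonneg (v+8/9)) (neg_nonneg.2 h2),
    mul_pos (sub_pos.2 h) (sub_pos.2 h)]

lemma cneg_right (q vp v : ℝ) (hq : 0 < q) (hq32 : q ≤ 32/27) (h1 : -3*q/4 ≤ vp)
    (h2 : vp < 0) (hroot : vp^3 - 2*q*vp - q^2 = 0) (h3 : vp < v) (h4 : v < 0) :
    v^3 - 2*q*v - q^2 < 0 := by
  have hvpsq : vp^2 ≤ 9*q^2/16 := by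
    nlinarith [mul_nonneg (show (0:ℝ) ≤ vp + 3*q/4 by linarith) (show (0:ℝ) ≤ 3*q/4 - vp by linarith)]
  have hQ : v^2 + v*vp + vp^2 - 2*q < 0 := by
    nlinarith [mul_pos (sub_pos.2 h3) (neg_pos.2 h2), mul_pos (sub_pos.2 h3) (neg_pos.2 h4)]
  nlinarith [mul_pos (sub_pos.2 h3) (neg_pos.2 hQ)]

lemma cmono (q v₀ v : ℝ) (hq : 0 < q) (hq32 : q ≤ 32/27) (h1 : -3*q/4 ≤ v₀) (h2 : v₀ ≤ v)
    (h3 : v ≤ -q/2) : v^3 - 2*q*v - q^2 ≤ v₀^3 - 2*q*v₀ - q^2 := by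
  have hv0 : v₀ ≤ -q/2 := le_trans h2 h3
  have hvpsq : v₀^2 ≤ 9*q^2/16 := by
    nlinarith [mul_nonneg (show (0:ℝ) ≤ v₀ + 3*q/4 by linarith) (show (0:ℝ) ≤ 3*q/4 - v₀ by linarith)]
  have hQ : v^2 + v*v₀ + v₀^2 - 2*q ≤ 0 := by
    nlinarith [mul_nonneg (sub_nonneg.2 h2) (show (0:ℝ) ≤ -v₀ by linarith),
      mul_nonneg (sub_nonneg.2 h2) (show (0:ℝ) ≤ -v by linarith)]
  nlinarith [mul_nonneg (sub_nonneg.2 h2) (neg_nonneg.2 hQ)]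

lemma bneg (q v vm : ℝ) (hq : 0 < q) (h1 : -2 < v) (h2 : v < vm) (h3 : vm ≤ -4/3)
    (hb : vm^3 + 2*vm^2 - q = 0) : v^3 + 2*v^2 - q < 0 := by
  nlinarith [mul_pos (sub_pos.2 h2) (sub_pos.2 h2), sq_nonneg (v + vm),
    mul_pos (sub_pos.2 h2) (sub_pos.2 (lt_of_lt_of_le h2 h3))]

lemma bmono (v v₀ : ℝ) (h2 : v ≤ v₀) (h3 : v₀ ≤ -4/3) :
    v^3 + 2*v^2 ≤ v₀^3 + 2*v₀^2 := by
  have hquad : 0 ≤ v₀^2 + v₀*v + v^2 + 2*(v₀+v) := by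
    nlinarith [sq_nonneg (v - v₀), mul_nonneg (show (0:ℝ) ≤ -(v+v₀)-8/3 by linarith)
      (show (0:ℝ) ≤ -(v+v₀) by linarith)]
  nlinarith [mul_nonneg (sub_nonneg.2 h2) hquad]

lemma escape_up {V : Set ℝ} {F : ℝ → ℝ} (hF : ∀ v ∈ V, F v ∈ V) {δ M v₀ : ℝ}
    (hδ : 0 < δ) (hM : ∀ v ∈ V, v < M) (h0 : v₀ ∈ V)
    (hstep : ∀ v ∈ V, v₀ ≤ v → v + δ ≤ F v) : False := by
  have key : ∀ n : ℕ, ∃ v ∈ V, v₀ + n * δ ≤ v := by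
    intro n
    induction n with
    | zero => exact ⟨v₀, h0, by simp⟩
    | succ m ih =>
      obtain ⟨v, hv, hle⟩ := ih
      have hm : (0:ℝ) ≤ (m:ℝ) := Nat.cast_nonneg m
      have h1 : v₀ ≤ v := by nlinarith
      refine ⟨F v, hF v hv, ?_⟩
      have := hstep v hv h1
      push_cast
      nlinarith
  obtain ⟨n, hn⟩ := exists_nat_gt ((M - v₀) / δ)
  obtain ⟨v, hv, hle⟩ := key n
  have := hM v hv
  rw [div_lt_iff₀ hδ] at hn
  linarith

lemma escape_down {V : Set ℝ} {F : ℝ → ℝ} (hF : ∀ v ∈ V, F v ∈ V) {δ M v₀ : ℝ}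
    (hδ : 0 < δ) (hM : ∀ v ∈ V, M < v) (h0 : v₀ ∈ V)
    (hstep : ∀ v ∈ V, v ≤ v₀ → F v ≤ v - δ) : False := by
  have key : ∀ n : ℕ, ∃ v ∈ V, v ≤ v₀ - n * δ := by
    intro n
    induction n with
    | zero => exact ⟨v₀, h0, by simp⟩
    | succ m ih =>
      obtain ⟨v, hv, hle⟩ := ih
      have hm : (0:ℝ) ≤ (m:ℝ) := Nat.cast_nonneg m
      have h1 : v ≤ v₀ := by nlinarith
      refine ⟨F v, hF v hv, ?_⟩
      have := hstep v hv h1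
      push_cast
      nlinarith
  obtain ⟨n, hn⟩ := exists_nat_gt ((v₀ - M) / δ)
  obtain ⟨v, hv, hle⟩ := key n
  have := hM v hv
  rw [div_lt_iff₀ hδ] at hn
  linarith


/-- Let `q > 0` and let `V` be a nonempty set of negative reals closed under
`v ↦ v ∥ v` and `v ↦ v ⋈_q v` (the latter being well defined, `q + 2v ≠ 0`).
Then `q ≤ 32/27` and `V ⊆ [vm, vp]`, where `vp` is the unique real root of
`v³ - 2qv - q² = 0` in `[-3q/4, -q/2)` and `vm = q/vp`. -/
theorem diamond_necessary_condition (q : ℝ) (hq : 0 < q) (V : Set ℝ)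
    (hne : V.Nonempty) (hneg : V ⊆ Set.Iio 0)
    (hpar : ∀ v ∈ V, parallelConn v v ∈ V)
    (hser : ∀ v ∈ V, q + 2 * v ≠ 0 ∧ seriesConn q v v ∈ V) :
    q ≤ 32 / 27 ∧
    ∀ vp : ℝ, -3 * q / 4 ≤ vp → vp < -q / 2 → vp ^ 3 - 2 * q * vp - q ^ 2 = 0 →
      ∀ v ∈ V, q / vp ≤ v ∧ v ≤ vp := by
  have hv0 : ∀ v ∈ V, v < 0 := fun v hv => hneg hv
  have hv2 : ∀ v ∈ V, -2 < v := by
    intro v hv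
    have h1 : parallelConn v v < 0 := hneg (hpar v hv)
    have h2 : v < 0 := hneg hv
    unfold parallelConn at h1
    nlinarith
  have hvq : ∀ v ∈ V, q + 2 * v < 0 := by
    intro v hv
    obtain ⟨hd, hs⟩ := hser v hv
    have h1 : seriesConn q v v < 0 := hneg hs
    have h2 : v < 0 := hneg hv
    unfold seriesConn at h1
    rcases lt_or_gt_of_ne hd with h | h
    · linarith
    · exfalso
      have hnum : 0 < v * v := mul_pos_of_neg_of_neg h2 h2
      have : 0 < v * v / (q + v + v) := div_pos hnum (by linarith)
      linarith
  set f : ℝ → ℝ := fun v => parallelConn (seriesConn q v v) (seriesConn q v v) with hf_def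
  set g : ℝ → ℝ := fun v => seriesConn q (parallelConn v v) (parallelConn v v) with hg_def
  have hfV : ∀ v ∈ V, f v ∈ V := fun v hv => hpar _ (hser v hv).2
  have hgV : ∀ v ∈ V, g v ∈ V := fun v hv => (hser _ (hpar v hv)).2
  have hf_eq : ∀ v ∈ V, f v = v + v * (v^3 - 2*q*v - q^2) / (q + 2*v)^2 := by
    intro v hv
    have hd : q + 2*v ≠ 0 := (hser v hv).1
    simp only [hf_def, parallelConn, seriesConn]
    rw [show q + v + v = q + 2*v by ring]
    have hd' : q + v * 2 ≠ 0 := by intro h; apply hd; linarith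
    field_simp
    ring
  have hD_neg : ∀ v ∈ V, q + 2*(v^2 + 2*v) < 0 := by
    intro v hv
    have hD : q + 2 * parallelConn v v < 0 := hvq _ (hpar v hv)
    unfold parallelConn at hD; nlinarith
  have hg_eq : ∀ v ∈ V, g v = v + v * (v^3 + 2*v^2 - q) / (q + 2*(v^2 + 2*v)) := by
    intro v hv
    have hD2 : q + 2*(v^2 + 2*v) ≠ 0 := ne_of_lt (hD_neg v hv)
    simp only [hg_def, seriesConn, parallelConn]
    rw [show q + ((1+v)*(1+v)-1) + ((1+v)*(1+v)-1) = q + 2*(v^2+2*v) by ring]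
    have hD2' : q + v * 2 * (v + 2) ≠ 0 := by intro h; apply hD2; linarith
    field_simp
    ring
  have part1 : q ≤ 32/27 := by
    by_contra hcon
    push_neg at hcon
    obtain ⟨v₀, hv₀⟩ := hne
    obtain ⟨x₀, hx₀mem, hx₀max⟩ := isCompact_Icc.exists_isMaxOn
      (Set.nonempty_Icc.mpr (by norm_num : (-2:ℝ) ≤ 0))
      (Continuous.continuousOn (by continuity : Continuous (fun v : ℝ => v^3 - 2*q*v - q^2)))
    have hε : 0 < -(x₀^3 - 2*q*x₀ - q^2) := by
      have := cneg_ptwise q x₀ hcon hx₀mem.1 hx₀mem.2; linarith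
    have hδ : 0 < q/2 * (-(x₀^3 - 2*q*x₀ - q^2)) / 16 := by
      apply div_pos (mul_pos (by linarith) hε) (by norm_num)
    refine escape_up hfV hδ (M := 0) hv0 hv₀ ?_
    intro v hv _
    have hc : v^3 - 2*q*v - q^2 ≤ -(-(x₀^3 - 2*q*x₀ - q^2)) := by
      have := hx₀max (Set.mem_Icc.mpr ⟨le_of_lt (hv2 v hv), le_of_lt (hv0 v hv)⟩)
      simpa using this
    rw [hf_eq v hv]
    exact step_up q v _ hq (hv2 v hv) (hv0 v hv) (hvq v hv) hc hε
  refine ⟨part1, ?_⟩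
  intro vp hvp1 hvp2 hvp3 v hv
  have hvp0 : vp < 0 := by nlinarith
  have hvpne : vp ≠ 0 := ne_of_lt hvp0
  constructor
  · -- lower bound: q / vp ≤ v
    by_contra hcon
    push_neg at hcon
    have hvm43 : q / vp ≤ -4/3 := by
      rw [div_le_iff_of_neg hvp0]; linarith
    have hbvm : (q/vp)^3 + 2*(q/vp)^2 - q = 0 := by
      field_simp
      linear_combination (-q) * hvp3
    revert hcon
    generalize q / vp = vm at hvm43 hbvm
    intro hcon
    have hbv : v^3 + 2*v^2 - q < 0 := bneg q v vm hq (hv2 v hv) hcon hvm43 hbvm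
    have hδ : 0 < 2/3 * (-(v^3 + 2*v^2 - q)) := by linarith
    refine escape_down hgV hδ (M := -2) hv2 hv ?_
    intro w hw hwv
    have hw43 : w ≤ -4/3 := by linarith [lt_of_lt_of_le hcon hvm43]
    have hB : w^3 + 2*w^2 - q ≤ -(-(v^3 + 2*v^2 - q)) := by
      have := bmono w v hwv (by linarith [lt_of_lt_of_le hcon hvm43])
      linarith
    rw [hg_eq w hw]
    exact step_down q w _ hq (hv2 w hw) hw43 (hD_neg w hw) hB (by linarith)
  · -- upper bound: v ≤ vp
    by_contra hcon
    push_neg at hcon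
    have hcv : v^3 - 2*q*v - q^2 < 0 :=
      cneg_right q vp v hq part1 hvp1 hvp0 hvp3 hcon (hv0 v hv)
    have hδ : 0 < q/2 * (-(v^3 - 2*q*v - q^2)) / 16 := by
      apply div_pos (mul_pos (by linarith) (by linarith)) (by norm_num)
    refine escape_up hfV hδ (M := 0) hv0 hv ?_
    intro w hw hvw
    have hC : w^3 - 2*q*w - q^2 ≤ -(-(v^3 - 2*q*v - q^2)) := by
      have := cmono q v w hq part1 (by linarith) hvw (by linarith [hvq w hw])
      linarith
    rw [hf_eq w hw]
    exact step_up q w _ hq (hv2 w hw) (hv0 w hw) (hvq w hw) hC (by linarith)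
end

section
/- Let q ≥ 1 and let v be a real number with q + 2v ≠ 0. Then the diamond map satisfies Diamond_q(v) ≥ −q, with strict inequality unless q = 1 and v = −1. -/
/-- The diamond map `Diamond_q(v) = v²(v² + 4v + 2q)/(q + 2v)²`, defined for
`q + 2v ≠ 0`; it arises as `(v ⋈_q v) ∥ (v ⋈_q v)`. -/
noncomputable def diamondMap (q v : ℝ) : ℝ :=
  v ^ 2 * (v ^ 2 + 4 * v + 2 * q) / (q + 2 * v) ^ 2

/-- For `q ≥ 1` and `q + 2v ≠ 0`, the diamond map satisfies `Diamond_q(v) ≥ -q`,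
with strict inequality unless `q = 1` and `v = -1`. -/
theorem diamondMap_ge_neg_q (q v : ℝ) (hq : 1 ≤ q) (h : q + 2 * v ≠ 0) :
    -q ≤ diamondMap q v ∧ (¬(q = 1 ∧ v = -1) → -q < diamondMap q v) := by
  have h2 : (0:ℝ) < (q + 2 * v) ^ 2 := by positivity
  have key : diamondMap q v + q
      = ((v ^ 2 + 2 * v + q) ^ 2 + (q - 1) * (q + 2 * v) ^ 2) / (q + 2 * v) ^ 2 := by
    unfold diamondMap
    rw [div_add' _ _ _ h2.ne', div_left_inj' h2.ne']
    ring
  constructor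
  · have hnum : 0 ≤ (v ^ 2 + 2 * v + q) ^ 2 + (q - 1) * (q + 2 * v) ^ 2 := by
      nlinarith [sq_nonneg (v ^ 2 + 2 * v + q)]
    have := div_nonneg hnum h2.le
    linarith [key.symm ▸ this]
  · intro hne
    have hnum : 0 < (v ^ 2 + 2 * v + q) ^ 2 + (q - 1) * (q + 2 * v) ^ 2 := by
      rcases lt_or_eq_of_le hq with hq1 | hq1
      · nlinarith [sq_nonneg (v ^ 2 + 2 * v + q)]
      · have hv : v ≠ -1 := fun hv => hne ⟨hq1.symm, hv⟩
        have : v + 1 ≠ 0 := fun h0 => hv (by linarith)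
        have h1 : 0 < (v + 1) ^ 2 := by positivity
        nlinarith [sq_nonneg (v ^ 2 + 2 * v + q), h1]
    have := div_pos hnum h2
    linarith [key.symm ▸ this]
end
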